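/- arXiv:1710.10476 — 2 statements merged into one kernel-verified Lean document; each statement's English description precedes it below -/
import Mathlib

section
/- Let K be a nearly locally presentable category in which all coproduct injections are monomorphisms. Then every object of K is nearly presentable, i.e., nearly μ-presentable for some regular cardinal μ. -/
universe w v u u₁ u₂

open CategoryTheory CategoryTheory.Limits Opposite

namespace NLP

variable {C : Type u} [Category.{v} C]

/-- The poset of subsets of `I` of cardinality `< κ`, ordered by inclusion. -/
abbrev SmallSub (κ : Cardinal.{w}) (I : Type w) : Type w :=
  {J : Set I // Cardinal.mk J < κ}

section
variable [HasCoproducts.{w} C]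

/-- The diagram of subcoproducts `∐_{j ∈ J} K_j`, for `J ⊆ I` with `|J| < κ`,
with subcoproduct injections as connecting morphisms. -/
noncomputable def subDiag (κ : Cardinal.{w}) {I : Type w} (K : I → C) :
    SmallSub κ I ⥤ C where
  obj J := ∐ (fun j : J.1 => K j)
  map {J J'} f :=
    Sigma.desc (fun j => Sigma.ι (fun j' : J'.1 => K j') ⟨j.1, leOfHom f j.2⟩)
  map_id J := by
    ext j
    simp
  map_comp {J J' J''} f g := by
    ext j
    simp

/-- The cocone on the subcoproduct diagram with vertex the full coproduct `∐ K`;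
this is the "special κ-directed colimit" expressing `∐ K` as the κ-directed colimit
of its subcoproducts of size `< κ`. -/
noncomputable def subCocone (κ : Cardinal.{w}) {I : Type w} (K : I → C) :
    Cocone (subDiag (C := C) κ K) where
  pt := ∐ K
  ι :=
    { app := fun J => Sigma.desc (fun j => Sigma.ι K j.1)
      naturality := by
        intro J J' f
        dsimp only [subDiag]
        ext j
        simp }

/-- The subcoproduct injection `∐_{j ∈ J} K_j ⟶ ∐_{i ∈ I} K_i`. -/
noncomputable def subInj (κ : Cardinal.{w}) {I : Type w} (K : I → C) (J : SmallSub κ I) :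
    (∐ fun j : J.1 => K j) ⟶ ∐ K :=
  Sigma.desc (fun j => Sigma.ι K j.1)

/-- An object `A` is nearly `κ`-presentable if its hom-functor `K(A,-)` preserves
special `κ`-directed colimits. -/
def NearlyPresentable (κ : Cardinal.{w}) (A : C) : Prop :=
  ∀ {I : Type w} (K : I → C),
    Nonempty (IsColimit ((coyoneda.obj (op A)).mapCocone (subCocone κ K)))

/-- `C` has monomorphisms stable under special `κ`-directed colimits. -/
def MonosStableUnderSpecial (κ : Cardinal.{w}) : Prop :=
  ∀ {I : Type w} (K : I → C) {X : C} (f : (∐ K) ⟶ X),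
    (∀ J : SmallSub κ I, Mono (subInj (C := C) κ K J ≫ f)) → Mono f

end

/-- A preordered set is `κ`-directed if every subset of cardinality `< κ` has
an upper bound. -/
def IsCardinalDirected (κ : Cardinal.{w}) (J : Type w) [Preorder J] : Prop :=
  ∀ S : Set J, Cardinal.mk S < κ → ∃ j : J, ∀ s ∈ S, s ≤ j

/-- An object `A` is `κ`-presentable if its hom-functor preserves `κ`-directed colimits. -/
def PresentableObj (κ : Cardinal.{v}) (A : C) : Prop :=
  ∀ (J : Type v) [PartialOrder J], IsCardinalDirected κ J →
    Nonempty (PreservesColimitsOfShape J (coyoneda.obj (op A)))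

/-- The restricted Yoneda functor `E_S : C ⥤ Set^{S^op}` for a full subcategory
on a set `S` of objects. -/
def restrictedYoneda (S : Set C) : C ⥤ ((ObjectProperty.FullSubcategory (· ∈ S))ᵒᵖ ⥤ Type v) :=
  yoneda ⋙ (Functor.whiskeringLeft (ObjectProperty.FullSubcategory (· ∈ S))ᵒᵖ Cᵒᵖ (Type v)).obj
    (ObjectProperty.ι (· ∈ S)).op

/-- A set `S` of objects is a strong generator if it is small and the restricted
Yoneda functor `E_S : C ⥤ Set^{S^op}` is faithful and conservative. -/
structure IsStrongGenerator (S : Set C) : Prop where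
  small : Small.{v} S
  faithful : (restrictedYoneda S).Faithful
  reflectsIsos : (restrictedYoneda S).ReflectsIsomorphisms

/-- A set `S` of objects is dense if the restricted Yoneda functor
`E_S : C ⥤ Set^{S^op}` is fully faithful. -/
def IsDenseSub (S : Set C) : Prop :=
  (restrictedYoneda S).Full ∧ (restrictedYoneda S).Faithful

/-- A category is weakly co-wellpowered if every object has only a set of strong
quotients. -/
def WeaklyCoWellPowered (C : Type u) [Category.{v} C] : Prop :=
  ∀ X : C, ∃ (ι : Type v) (Z : ι → C) (p : ∀ i, X ⟶ Z i),
    (∀ i, StrongEpi (p i)) ∧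
    ∀ (Y : C) (f : X ⟶ Y), StrongEpi f → ∃ (i : ι) (e : Z i ≅ Y), p i ≫ e.hom = f

/-- A cocomplete category is nearly locally `κ`-presentable if it is weakly
co-wellpowered and has a strong generator consisting of nearly `κ`-presentable
objects. -/
structure IsNearlyLocallyPresentable (κ : Cardinal.{v}) (C : Type u) [Category.{v} C] : Prop where
  isRegular : κ.IsRegular
  cocomplete : HasColimitsOfSize.{v, v} C
  wcwp : WeaklyCoWellPowered C
  exists_gen : ∃ S : Set C, IsStrongGenerator S ∧
    ∀ A ∈ S, haveI := cocomplete; NearlyPresentable κ A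

/-- A category is locally `κ`-presentable if it is cocomplete and has a strong
generator consisting of `κ`-presentable objects. -/
structure IsLocallyPresentable (κ : Cardinal.{v}) (C : Type u) [Category.{v} C] : Prop where
  isRegular : κ.IsRegular
  cocomplete : HasColimitsOfSize.{v, v} C
  exists_gen : ∃ S : Set C, IsStrongGenerator S ∧ ∀ A ∈ S, PresentableObj κ A

/-- A category has regular factorizations if every morphism factors as a regular
epimorphism followed by a monomorphism. -/
def HasRegularFactorizations (C : Type u) [Category.{v} C] : Prop :=
  ∀ ⦃X Y : C⦄ (f : X ⟶ Y), ∃ (Z : C) (e : X ⟶ Z) (m : Z ⟶ Y),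
    Nonempty (RegularEpi e) ∧ Mono m ∧ e ≫ m = f

/-- A category has (strong epi, mono)-factorizations if every morphism factors as
a strong epimorphism followed by a monomorphism. -/
def HasStrongEpiMonoFacts (C : Type u) [Category.{v} C] : Prop :=
  ∀ ⦃X Y : C⦄ (f : X ⟶ Y), ∃ (Z : C) (e : X ⟶ Z) (m : Z ⟶ Y),
    StrongEpi e ∧ Mono m ∧ e ≫ m = f

/-- A class of objects `T` is closed under colimits if the vertex of any colimit
cocone on a small diagram with values in `T` belongs to `T`. -/
def ClosedUnderColimits (T : Set C) : Prop :=
  ∀ {J : Type v} [SmallCategory J] (F : J ⥤ C), (∀ j, F.obj j ∈ T) →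
    ∀ (c : Cocone F), IsColimit c → c.pt ∈ T

end NLP
namespace NLP

variable {C : Type u} [Category.{v} C]

section Mono

variable [HasCoproducts.{v} C]

/-- Auxiliary two-object family: the subcoproduct over `J` and over its complement. -/
noncomputable def Mfam {I : Type v} (K : I → C) (J : Set I) : ULift.{v} Bool → C :=
  fun b => cond b.down (∐ fun j : J => K j.1) (∐ fun j : ↥(Jᶜ) => K j.1)

/-- The canonical map from the coproduct of the two subcoproducts to the full coproduct. -/
noncomputable def phiMap {I : Type v} (K : I → C) (J : Set I) :
    (∐ Mfam K J) ⟶ ∐ K :=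
  Sigma.desc (fun b => match b with
    | ⟨true⟩ => Sigma.desc (fun j : J => Sigma.ι K j.1)
    | ⟨false⟩ => Sigma.desc (fun j : ↥(Jᶜ) => Sigma.ι K j.1))

open scoped Classical in
/-- The inverse map. -/
noncomputable def psiMap {I : Type v} (K : I → C) (J : Set I) :
    (∐ K) ⟶ ∐ Mfam K J :=
  Sigma.desc (fun i =>
    if h : i ∈ J then Sigma.ι (fun j : J => K j.1) ⟨i, h⟩ ≫ Sigma.ι (Mfam K J) ⟨true⟩
    else
      (Sigma.ι (fun j : ↥(Jᶜ) => K j.1) ⟨i, h⟩ :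
          K i ⟶ ∐ fun j : ↥(Jᶜ) => K j.1) ≫ Sigma.ι (Mfam K J) ⟨false⟩)

lemma iota_true_phi {I : Type v} (K : I → C) (J : Set I) :
    Sigma.ι (Mfam K J) ⟨true⟩ ≫ phiMap K J
      = (Sigma.desc (fun j : J => Sigma.ι K j.1) :
          (∐ fun j : J => K j.1) ⟶ ∐ K) := by
  simp [phiMap]
  rfl

lemma iota_false_phi {I : Type v} (K : I → C) (J : Set I) :
    Sigma.ι (Mfam K J) ⟨false⟩ ≫ phiMap K J
      = (Sigma.desc (fun j : ↥(Jᶜ) => Sigma.ι K j.1) :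
          (∐ fun j : ↥(Jᶜ) => K j.1) ⟶ ∐ K) := by
  simp [phiMap]
  rfl

open scoped Classical in
lemma iota_psi {I : Type v} (K : I → C) (J : Set I) (i : I) :
    Sigma.ι K i ≫ psiMap K J =
      if h : i ∈ J then Sigma.ι (fun j : J => K j.1) ⟨i, h⟩ ≫ Sigma.ι (Mfam K J) ⟨true⟩
      else
        (Sigma.ι (fun j : ↥(Jᶜ) => K j.1) ⟨i, h⟩ :
            K i ⟶ ∐ fun j : ↥(Jᶜ) => K j.1) ≫ Sigma.ι (Mfam K J) ⟨false⟩ := by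
  simp only [psiMap, Sigma.ι_desc]
  split_ifs <;> rfl

lemma descJ_psi {I : Type v} (K : I → C) (J : Set I) :
    (Sigma.desc (fun j : J => Sigma.ι K j.1) :
        (∐ fun j : J => K j.1) ⟶ ∐ K) ≫ psiMap K J = Sigma.ι (Mfam K J) ⟨true⟩ := by
  classical
  ext j
  rw [← Category.assoc, CategoryTheory.Limits.Sigma.ι_desc, iota_psi, dif_pos j.2]
  rfl

lemma descJc_psi {I : Type v} (K : I → C) (J : Set I) :
    (Sigma.desc (fun j : ↥(Jᶜ) => Sigma.ι K j.1) :
        (∐ fun j : ↥(Jᶜ) => K j.1) ⟶ ∐ K) ≫ psiMap K J = Sigma.ι (Mfam K J) ⟨false⟩ := by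
  classical
  ext j
  rw [← Category.assoc, CategoryTheory.Limits.Sigma.ι_desc, iota_psi, dif_neg j.2]
  rfl

lemma isIso_phi {I : Type v} (K : I → C) (J : Set I) : IsIso (phiMap K J) := by
  classical
  refine ⟨psiMap K J, ?_, ?_⟩
  · ext ⟨b⟩
    rw [Category.comp_id]
    cases b
    · rw [← Category.assoc, iota_false_phi]; exact descJc_psi K J
    · rw [← Category.assoc, iota_true_phi]; exact descJ_psi K J
  · ext i
    rw [Category.comp_id, ← Category.assoc, iota_psi]
    by_cases h : i ∈ J
    · rw [dif_pos h]
      exact (Category.assoc _ _ _).trans ((congrArg (fun k => Sigma.ι (fun j : J => K j.1) ⟨i, h⟩ ≫ k)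
        (iota_true_phi K J)).trans (Sigma.ι_desc _ _))
    · rw [dif_neg h]
      exact (Category.assoc _ _ _).trans ((congrArg
        (fun k => (Sigma.ι (fun j : ↥(Jᶜ) => K j.1) ⟨i, h⟩ : K i ⟶ ∐ fun j : ↥(Jᶜ) => K j.1) ≫ k)
        (iota_false_phi K J)).trans (Sigma.ι_desc _ _))

lemma mono_subdesc
    (hm : ∀ {I : Type v} (K : I → C) (i : I), Mono (Sigma.ι K i))
    {I : Type v} (K : I → C) (J : Set I) :
    Mono (Sigma.desc (fun j : J => Sigma.ι K j.1) :
      (∐ fun j : J => K j) ⟶ ∐ K) := by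
  rw [← iota_true_phi K J]
  haveI := hm (Mfam K J) ⟨true⟩
  haveI := isIso_phi K J
  exact @mono_comp _ _ _ _ _ (Sigma.ι (Mfam K J) ⟨true⟩) (hm (Mfam K J) ⟨true⟩) (phiMap K J)
    (by infer_instance)

end Mono

end NLP
namespace NLP

variable {C : Type u} [Category.{v} C]

lemma isIso_of_mono_of_surj {S : Set C} (hS : IsStrongGenerator S)
    {Y X : C} (m : Y ⟶ X) [Mono m]
    (hsurj : ∀ (A : C), A ∈ S → ∀ g : A ⟶ X, ∃ g', g' ≫ m = g) :
    IsIso m := by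
  haveI := hS.reflectsIsos
  haveI : ∀ A, IsIso (((restrictedYoneda S).map m).app A) := by
    intro A
    rw [isIso_iff_bijective]
    constructor
    · intro g1 g2 hg
      exact (cancel_mono m).1 hg
    · intro g
      obtain ⟨g', hg'⟩ := hsurj A.unop.obj A.unop.property g
      exact ⟨g', hg'⟩
  haveI : IsIso ((restrictedYoneda S).map m) := NatIso.isIso_of_isIso_app _
  exact isIso_of_reflects_iso m (restrictedYoneda S)

lemma semFactorization [HasColimitsOfSize.{v, v} C] (hw : WeaklyCoWellPowered C)
    {P X : C} (e : P ⟶ X) :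
    ∃ (W : C) (c : P ⟶ W) (r : W ⟶ X), StrongEpi c ∧ Mono r ∧ c ≫ r = e := by
  obtain ⟨ιt, Z, p, hse, hrep⟩ := hw P
  let ι' := {i : ιt // ∃ r, p i ≫ r = e}
  let objs : ι' → C := fun i => Z i.1
  let arrows : ∀ i : ι', P ⟶ objs i := fun i => p i.1
  let W := widePushout P objs arrows
  let c : P ⟶ W := WidePushout.head arrows
  have hci : ∀ i, arrows i ≫ WidePushout.ι arrows i = c := WidePushout.arrow_ι arrows
  have hcepi : Epi c := by
    constructor
    intro Y u v huv
    apply WidePushout.hom_ext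
    · intro j
      haveI : Epi (arrows j) := (hse j.1).epi
      have h2 : arrows j ≫ WidePushout.ι arrows j ≫ u
          = arrows j ≫ WidePushout.ι arrows j ≫ v := by
        rw [← Category.assoc, ← Category.assoc, hci j, huv]
      exact (cancel_epi (arrows j)).1 h2
    · exact huv
  have hcse : StrongEpi c := by
    refine ⟨hcepi, fun U V z hz => ⟨fun {u v} sq => ?_⟩⟩
    have sqi : ∀ i : ι', CommSq u (arrows i) z (WidePushout.ι arrows i ≫ v) := by
      intro i
      constructor
      rw [sq.w, ← Category.assoc, hci i]
    haveI : ∀ i : ι', HasLiftingProperty (arrows i) z := fun i => (hse i.1).llp z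
    let ℓ : W ⟶ U := WidePushout.desc u (fun i => (sqi i).lift)
      (fun i => (sqi i).fac_left)
    refine ⟨⟨⟨ℓ, WidePushout.head_desc _ _ _ _, ?_⟩⟩⟩
    apply WidePushout.hom_ext
    · intro j
      rw [← Category.assoc, WidePushout.ι_desc]
      exact (sqi j).fac_right
    · rw [← Category.assoc]
      show (c ≫ ℓ) ≫ z = c ≫ v
      rw [WidePushout.head_desc, sq.w]
  let r : W ⟶ X := WidePushout.desc e (fun i => i.2.choose) (fun i => i.2.choose_spec)
  have hcr : c ≫ r = e := WidePushout.head_desc _ _ _ _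
  refine ⟨W, c, r, hcse, ?_, hcr⟩
  constructor
  intro Y u v huv
  let q := coequalizer.π u v
  let r' := coequalizer.desc r huv
  have hqr : q ≫ r' = r := coequalizer.π_desc _ _
  haveI := hcse
  haveI : StrongEpi (c ≫ q) := strongEpi_comp c q
  obtain ⟨j, ε, hj⟩ := hrep _ (c ≫ q) inferInstance
  have hj' : ∃ rr, p j ≫ rr = e := by
    refine ⟨ε.hom ≫ r', ?_⟩
    rw [← Category.assoc, hj, Category.assoc, hqr, hcr]
  let j' : ι' := ⟨j, hj'⟩
  let d : coequalizer u v ⟶ W := ε.inv ≫ WidePushout.ι arrows j'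
  have hqd : q ≫ d = 𝟙 W := by
    apply (cancel_epi c).1
    rw [Category.comp_id, ← Category.assoc, ← Category.assoc]
    show ((c ≫ q) ≫ ε.inv) ≫ WidePushout.ι arrows j' = c
    rw [← hj]
    simp only [Category.assoc, Iso.hom_inv_id_assoc]
    exact hci j'
  have hcond : u ≫ q = v ≫ q := coequalizer.condition u v
  calc u = u ≫ q ≫ d := by rw [hqd, Category.comp_id]
    _ = v ≫ q ≫ d := by rw [← Category.assoc, hcond, Category.assoc]
    _ = v := by rw [hqd, Category.comp_id]

end NLP
namespace NLP

variable {C : Type u} [Category.{v} C]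

section Coprod

variable [HasCoproducts.{v} C]

lemma mono_subInj (hm : ∀ {I : Type v} (K : I → C) (i : I), Mono (Sigma.ι K i))
    (κ : Cardinal.{v}) {I : Type v} (K : I → C) (J : SmallSub κ I) :
    Mono (subInj κ K J) :=
  mono_subdesc hm K J.1

lemma map_comp_subInj (κ : Cardinal.{v}) {I : Type v} (K : I → C)
    {J J' : SmallSub κ I} (f : J ⟶ J') :
    (subDiag κ K).map f ≫ subInj κ K J' = subInj κ K J := by
  dsimp only [subDiag, subInj]
  ext j
  rw [← Category.assoc, CategoryTheory.Limits.Sigma.ι_desc,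
    CategoryTheory.Limits.Sigma.ι_desc, CategoryTheory.Limits.Sigma.ι_desc]

/-- The inclusion of a smaller subcoproduct into a larger one. -/
noncomputable def inclSub (κ μ : Cardinal.{v}) {I : Type v} (K : I → C)
    (Js : SmallSub κ I) (Jb : SmallSub μ I) (hsub : Js.1 ⊆ Jb.1) :
    (subDiag κ K).obj Js ⟶ (subDiag μ K).obj Jb :=
  Sigma.desc (fun j => Sigma.ι (fun j' : Jb.1 => K j'.1) ⟨j.1, hsub j.2⟩)

lemma inclSub_comp (κ μ : Cardinal.{v}) {I : Type v} (K : I → C)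
    (Js : SmallSub κ I) (Jb : SmallSub μ I) (hsub : Js.1 ⊆ Jb.1) :
    inclSub κ μ K Js Jb hsub ≫ subInj μ K Jb = subInj κ K Js := by
  dsimp only [inclSub, subDiag, subInj]
  ext j
  rw [← Category.assoc, CategoryTheory.Limits.Sigma.ι_desc,
    CategoryTheory.Limits.Sigma.ι_desc, CategoryTheory.Limits.Sigma.ι_desc]

/-- A map from a `ν`-indexed coproduct of objects, each of whose maps into `∐ K`
factor through a `< κ`-subcoproduct, factors through a `< μ`-subcoproduct,
provided `ν * κ < μ`. -/
lemma factor_coprod {κ μ : Cardinal.{v}} {ixt : Type v} (G : ixt → C)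
    (hbound : Cardinal.mk ixt * κ < μ)
    {I : Type v} (K : I → C)
    (hG : ∀ (t : ixt) (g : G t ⟶ ∐ K), ∃ (J : SmallSub κ I)
      (u : G t ⟶ (subDiag κ K).obj J), u ≫ subInj κ K J = g)
    (f : (∐ G) ⟶ ∐ K) :
    ∃ (J : SmallSub μ I) (d : (∐ G) ⟶ (subDiag μ K).obj J),
      d ≫ subInj μ K J = f := by
  choose Jf uf huf using fun t => hG t (Sigma.ι G t ≫ f)
  have hJstar : Cardinal.mk (⋃ t, (Jf t).1 : Set I) < μ := by
    refine lt_of_le_of_lt (le_trans (Cardinal.mk_iUnion_le _) ?_) hbound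
    rcases isEmpty_or_nonempty ixt with hie | hne
    · simp
    · exact mul_le_mul' le_rfl (ciSup_le' fun t => ((Jf t).2).le)
  refine ⟨⟨⋃ t, (Jf t).1, hJstar⟩, Sigma.desc (fun t => uf t ≫
    inclSub κ μ K (Jf t) ⟨⋃ t, (Jf t).1, hJstar⟩
      (Set.subset_iUnion (fun t => ((Jf t).1 : Set I)) t)), ?_⟩
  ext t
  erw [← Category.assoc, CategoryTheory.Limits.Sigma.ι_desc, Category.assoc,
    inclSub_comp, huf t]

/-- If every map `X ⟶ ∐ K` factors through a small subcoproduct, and subcoproduct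
injections are monomorphisms, then `X` sees `∐ K` as the special colimit. -/
lemma isColimit_of_factor {μ : Cardinal.{v}} (hμ0 : Cardinal.aleph0 ≤ μ)
    (hm : ∀ {I : Type v} (K : I → C) (i : I), Mono (Sigma.ι K i))
    {I : Type v} (K : I → C) (X : C)
    (hfac : ∀ f : X ⟶ ∐ K, ∃ (J : SmallSub μ I)
      (g : X ⟶ (subDiag μ K).obj J), g ≫ subInj μ K J = f) :
    Nonempty (IsColimit ((coyoneda.obj (op X)).mapCocone (subCocone μ K))) := by
  choose Jc gc hgc using hfac
  have key : ∀ (s : Cocone (subDiag μ K ⋙ coyoneda.obj (op X)))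
      (J : SmallSub μ I) (g : X ⟶ (subDiag μ K).obj J),
      s.ι.app J g = s.ι.app (Jc (g ≫ subInj μ K J)) (gc (g ≫ subInj μ K J)) := by
    intro s J g
    set f := g ≫ subInj μ K J with hf
    have hUlt : Cardinal.mk ↥(J.1 ∪ (Jc f).1) < μ :=
      lt_of_le_of_lt (Cardinal.mk_union_le _ _)
        (Cardinal.add_lt_of_lt hμ0 J.2 (Jc f).2)
    let J2 : SmallSub μ I := ⟨J.1 ∪ (Jc f).1, hUlt⟩
    have h1 : J ≤ J2 := Set.subset_union_left
    have h2 : Jc f ≤ J2 := Set.subset_union_right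
    let φ1 : J ⟶ J2 := homOfLE h1
    let φ2 : Jc f ⟶ J2 := homOfLE h2
    have e1 : g ≫ (subDiag μ K).map φ1 = gc f ≫ (subDiag μ K).map φ2 := by
      haveI := mono_subInj hm μ K J2
      apply (cancel_mono (subInj μ K J2)).1
      erw [Category.assoc, Category.assoc, map_comp_subInj, map_comp_subInj, hgc f]
    have n1 := ConcreteCategory.congr_hom (s.w φ1) g
    have n2 := ConcreteCategory.congr_hom (s.w φ2) (gc f)
    calc s.ι.app J g = s.ι.app J2 (g ≫ (subDiag μ K).map φ1) := n1.symm
      _ = s.ι.app J2 (gc f ≫ (subDiag μ K).map φ2) := by rw [e1]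
      _ = s.ι.app (Jc f) (gc f) := n2
  refine ⟨{ desc := fun s => TypeCat.ofHom (fun f => s.ι.app (Jc f) (gc f))
            fac := ?_
            uniq := ?_ }⟩
  · intro s J
    ext g
    exact (key s J g).symm
  · intro s m hm'
    ext f
    conv_lhs => rw [← hgc f]
    exact ConcreteCategory.congr_hom (hm' (Jc f)) (gc f)

end Coprod

end NLP
/-- In a nearly locally presentable category in which all coproduct
injections are monomorphisms, every object is nearly presentable. -/
theorem NLP.stmt12 {C : Type u} [Category.{v} C] (κ : Cardinal.{v})
    (h : IsNearlyLocallyPresentable κ C)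
    (hmono : ∀ {I : Type v} (K : I → C) (i : I),
      haveI := h.cocomplete
      Mono (Sigma.ι K i))
    (X : C) :
    ∃ μ : Cardinal.{v}, μ.IsRegular ∧
      (haveI := h.cocomplete
       NearlyPresentable μ X) := by
  haveI := h.cocomplete
  obtain ⟨S, hSgen, hSpres⟩ := h.exists_gen
  haveI hsmall : Small.{v} ↥S := hSgen.small
  -- the set of all morphisms from generators to `X`
  let T := Σ A : ↥S, ((A : C) ⟶ X)
  haveI : Small.{v} T := by infer_instance
  let eqv := equivShrink T
  let G : Shrink.{v} T → C := fun t => ((eqv.symm t).1 : C)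
  let e : (∐ G) ⟶ X := Sigma.desc (fun t => (eqv.symm t).2)
  -- `e` is a strong epimorphism
  obtain ⟨W, c, r, hcse, hrmono, hcr⟩ := semFactorization h.wcwp e
  haveI : Mono r := hrmono
  have hstep : ∀ t : Shrink.{v} T, ∃ g' : ((eqv.symm t).1 : C) ⟶ W,
      g' ≫ r = (eqv.symm t).2 := by
    intro t
    refine ⟨Sigma.ι G t ≫ c, ?_⟩
    rw [Category.assoc, hcr]
    exact CategoryTheory.Limits.Sigma.ι_desc _ _
  have hstep' : ∀ p : T, ∃ g' : ((p.1 : C)) ⟶ W, g' ≫ r = p.2 := by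
    intro p
    obtain ⟨t, ht⟩ := eqv.symm.surjective p
    subst ht
    exact hstep t
  have hsurj : ∀ (A : C), A ∈ S → ∀ g : A ⟶ X, ∃ g', g' ≫ r = g := by
    intro A hA g
    exact hstep' ⟨⟨A, hA⟩, g⟩
  haveI hriso : IsIso r := isIso_of_mono_of_surj hSgen r hsurj
  have hse : StrongEpi e := by
    rw [← hcr]
    haveI := hcse
    exact strongEpi_comp c r
  -- the bound
  set ν := max (Cardinal.mk (Shrink.{v} T) * κ) κ with hν
  have hν0 : Cardinal.aleph0 ≤ ν := le_trans h.isRegular.aleph0_le (le_max_right _ _)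
  have hμreg : (Order.succ ν).IsRegular := Cardinal.isRegular_succ hν0
  refine ⟨Order.succ ν, hμreg, ?_⟩
  have hμ0 : Cardinal.aleph0 ≤ Order.succ ν := hμreg.aleph0_le
  intro I K
  refine isColimit_of_factor hμ0 (fun {I'} K' i => hmono K' i) K X ?_
  intro f
  -- factor `e ≫ f` through a small subcoproduct
  have hbound : Cardinal.mk (Shrink.{v} T) * κ < Order.succ ν :=
    lt_of_le_of_lt (le_max_left _ _) (Order.lt_succ ν)
  have hG : ∀ (t : Shrink.{v} T) (g : G t ⟶ ∐ K), ∃ (J : SmallSub κ I)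
      (u : G t ⟶ (subDiag κ K).obj J), u ≫ subInj κ K J = g := by
    intro t g
    obtain ⟨hc⟩ := hSpres ((eqv.symm t).1 : C) (eqv.symm t).1.2 K
    obtain ⟨J, y, hy⟩ := Types.jointly_surjective_of_isColimit hc g
    exact ⟨J, y, hy⟩
  obtain ⟨J, d, hd⟩ := factor_coprod G hbound K hG (e ≫ f)
  have sq : CommSq d e (subInj (Order.succ ν) K J) f := ⟨hd⟩
  haveI : Mono (subInj (Order.succ ν) K J) :=
    mono_subInj (fun {I'} K' i => hmono K' i) (Order.succ ν) K J
  haveI : sq.HasLift := (hse.llp (subInj (Order.succ ν) K J)).sq_hasLift sq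
  exact ⟨J, sq.lift, sq.fac_right⟩
end

section
/- Let K be a full reflective subcategory of a locally λ-presentable category L such that the inclusion functor G : K → L is conservative and sends special λ-directed colimits (of K) to λ-directed colimits (in L). If K is complete, cocomplete and weakly co-wellpowered, then K is nearly locally λ-presentable. -/
universe w v u u₁ u₂

open CategoryTheory CategoryTheory.Limits Opposite

section Aux

variable {K : Type u₁} {L : Type u₂} [Category.{v} K] [Category.{v} L]

/-- The natural isomorphism `K(F A, -) ≅ L(A, G -)` induced by an adjunction `F ⊣ G`. -/
noncomputable def NLP.adjCoyonedaIso (G : K ⥤ L) (F : L ⥤ K) (adj : F ⊣ G) (A : L) :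
    coyoneda.obj (op (F.obj A)) ≅ G ⋙ coyoneda.obj (op A) :=
  NatIso.ofComponents (fun X => Equiv.toIso (adj.homEquiv A X)) (by
    intro X Y f
    ext u
    exact adj.homEquiv_naturality_right u f)

lemma NLP.restrictedYoneda_map_app {C : Type u} [Category.{v} C] (S : Set C) {X Y : C}
    (f : X ⟶ Y) (B : ObjectProperty.FullSubcategory (· ∈ S)) (u : B.obj ⟶ X) :
    ((restrictedYoneda S).map f).app (op B) u = u ≫ f := rfl

lemma NLP.smallSub_directed (κ : Cardinal.{w}) (hreg : κ.IsRegular) (I : Type w) :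
    IsCardinalDirected κ (SmallSub κ I) := by
  intro T hT
  refine ⟨⟨⋃ t : T, (t : SmallSub κ I).1, ?_⟩, ?_⟩
  · refine lt_of_le_of_lt Cardinal.mk_iUnion_le_sum_mk ?_
    exact Cardinal.sum_lt_of_isRegular hreg hT (fun t => t.1.2)
  · intro s hs
    exact Set.subset_iUnion (fun t : T => (t : SmallSub κ I).1) ⟨s, hs⟩

end Aux

/-- Let `K` be a full reflective subcategory of a locally
`κ`-presentable category `L`, with the (fully faithful) inclusion `G : K ⥤ L`
conservative and sending special `κ`-directed colimits to colimits. If `K` is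
complete, cocomplete and weakly co-wellpowered, then `K` is nearly locally
`κ`-presentable. -/

theorem NLP.stmt14 {K : Type u₁} {L : Type u₂} [Category.{v} K] [Category.{v} L]
    (κ : Cardinal.{v}) (hL : IsLocallyPresentable κ L)
    (G : K ⥤ L) [G.Full] [G.Faithful] [G.ReflectsIsomorphisms]
    (F : L ⥤ K) (adj : F ⊣ G)
    [HasLimitsOfSize.{v, v} K] [HasColimitsOfSize.{v, v} K]
    (hw : WeaklyCoWellPowered K)
    (hG : ∀ {I : Type v} (Ki : I → K),
      Nonempty (IsColimit (G.mapCocone (subCocone κ Ki)))) :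
    IsNearlyLocallyPresentable κ K := by
  obtain ⟨hreg, hLcc, S', hSG', hpres⟩ := hL
  haveI := hLcc
  haveI := hSG'.small
  haveI := hSG'.faithful
  haveI := hSG'.reflectsIsos
  refine ⟨hreg, inferInstance, hw, ⟨F.obj '' S', ⟨inferInstance, ?_, ?_⟩, ?_⟩⟩
  · -- faithful
    refine ⟨fun {X Y} {f g} h => ?_⟩
    have hf : ∀ (A : L) (hA : A ∈ S') (u : F.obj A ⟶ X), u ≫ f = u ≫ g := by
      intro A hA u
      have := congrArg (fun t : (restrictedYoneda (F.obj '' S')).obj X ⟶ (restrictedYoneda (F.obj '' S')).obj Y => NatTrans.app t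
        (op (⟨F.obj A, Set.mem_image_of_mem _ hA⟩ : ObjectProperty.FullSubcategory (· ∈ F.obj '' S'))) u) h
      exact this
    apply G.map_injective
    apply (restrictedYoneda S').map_injective
    ext B v
    show v ≫ G.map f = v ≫ G.map g
    have h1 := adj.homEquiv_naturality_right ((adj.homEquiv B.unop.obj X).symm v) f
    have h2 := adj.homEquiv_naturality_right ((adj.homEquiv B.unop.obj X).symm v) g
    rw [(adj.homEquiv B.unop.obj X).apply_symm_apply v] at h1 h2
    rw [← h1, ← h2, hf _ B.unop.property]
  · -- reflects isos
    refine ⟨fun {X Y} f hf => ?_⟩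
    suffices h : IsIso (G.map f) by exact isIso_of_reflects_iso f G
    suffices h : IsIso ((restrictedYoneda S').map (G.map f)) by
      exact isIso_of_reflects_iso (G.map f) (restrictedYoneda S')
    have happ : ∀ B, IsIso (((restrictedYoneda S').map (G.map f)).app B) := by
      intro B
      obtain ⟨⟨A, hA⟩⟩ := B
      rw [isIso_iff_bijective]
      have hcomp : IsIso (((restrictedYoneda (F.obj '' S')).map f).app
          (op (⟨F.obj A, Set.mem_image_of_mem _ hA⟩ : ObjectProperty.FullSubcategory (· ∈ F.obj '' S')))) :=
        inferInstance
      have hbij : Function.Bijective (fun u : F.obj A ⟶ X => u ≫ f) :=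
        (isIso_iff_bijective _).mp hcomp
      have key : (fun v : A ⟶ G.obj X => v ≫ G.map f) =
          (adj.homEquiv A Y) ∘ (fun u : F.obj A ⟶ X => u ≫ f) ∘ (adj.homEquiv A X).symm := by
        funext v
        show v ≫ G.map f = (adj.homEquiv A Y) ((adj.homEquiv A X).symm v ≫ f)
        have h1 := adj.homEquiv_naturality_right ((adj.homEquiv A X).symm v) f
        rw [Equiv.apply_symm_apply] at h1
        rw [h1]
      show Function.Bijective (fun v : A ⟶ G.obj X => v ≫ G.map f)
      rw [key]
      exact (adj.homEquiv A Y).bijective.comp (hbij.comp (adj.homEquiv A X).symm.bijective)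
    haveI : ∀ B, IsIso (((restrictedYoneda S').map (G.map f)).app B) := happ
    exact NatIso.isIso_of_isIso_app _
  · -- nearly presentable
    rintro B ⟨A, hA, rfl⟩
    intro I Ki
    obtain ⟨hp⟩ := hpres A hA (SmallSub κ I) (smallSub_directed κ hreg I)
    have h1 : IsColimit ((coyoneda.obj (op A)).mapCocone (G.mapCocone (subCocone κ Ki))) :=
      isColimitOfPreserves _ (hG Ki).some
    have h2 : IsColimit ((G ⋙ coyoneda.obj (op A)).mapCocone (subCocone κ Ki)) := h1
    exact ⟨IsColimit.mapCoconeEquiv (adjCoyonedaIso G F adj A).symm h2⟩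
end
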